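/- A commutative Banach algebra is ideally amenable if and only if it is weakly amenable. -/

import Mathlib

open NormedSpace

noncomputable section

variable {A : Type*} [NonUnitalNormedRing A] [NormedSpace ℂ A]
  [IsScalarTower ℂ A A] [SMulCommClass ℂ A A]

/-- A closed two-sided ideal of a Banach algebra, given as a closed submodule
stable under left and right multiplication. -/
structure IsClosedTwoSidedIdeal (I : Submodule ℂ A) : Prop where
  isClosed : IsClosed (I : Set A)
  mul_left : ∀ (a : A) ⦃x : A⦄, x ∈ I → a * x ∈ I
  mul_right : ∀ (a : A) ⦃x : A⦄, x ∈ I → x * a ∈ I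

/-- `D : A → I*` is a derivation for the canonical dual bimodule structure:
`⟨a·f, i⟩ = ⟨f, i a⟩` and `⟨f·a, i⟩ = ⟨f, a i⟩`, so that
`D(ab) = a·D(b) + D(a)·b` reads pointwise as below. -/
def IsIdealDerivation (I : Submodule ℂ A) (hI : IsClosedTwoSidedIdeal I)
    (D : A →L[ℂ] StrongDual ℂ I) : Prop :=
  ∀ a b : A, ∀ i : I, D (a * b) i =
    D b ⟨(i : A) * a, hI.mul_right a i.2⟩ + D a ⟨b * (i : A), hI.mul_left b i.2⟩

/-- `D : A → I*` is inner: `D = δ_ξ`, i.e. `D a = a·ξ - ξ·a`. -/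
def IsInnerIdealDerivation (I : Submodule ℂ A) (hI : IsClosedTwoSidedIdeal I)
    (D : A →L[ℂ] StrongDual ℂ I) : Prop :=
  ∃ ξ : StrongDual ℂ I, ∀ (a : A) (i : I),
    D a i = ξ ⟨(i : A) * a, hI.mul_right a i.2⟩ - ξ ⟨a * (i : A), hI.mul_left a i.2⟩

/-- `A` is ideally amenable: for every closed two-sided ideal `I`,
every continuous derivation `A → I*` is inner. -/
def IdeallyAmenable (A : Type*) [NonUnitalNormedRing A] [NormedSpace ℂ A]
    [IsScalarTower ℂ A A] [SMulCommClass ℂ A A] : Prop :=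
  ∀ (I : Submodule ℂ A) (hI : IsClosedTwoSidedIdeal I) (D : A →L[ℂ] StrongDual ℂ I),
    IsIdealDerivation I hI D → IsInnerIdealDerivation I hI D

/-- `A` is weakly amenable: every continuous derivation `A → A*` is inner,
where `⟨a·f, x⟩ = ⟨f, x a⟩` and `⟨f·a, x⟩ = ⟨f, a x⟩`. -/
def WeaklyAmenable (A : Type*) [NonUnitalNormedRing A] [NormedSpace ℂ A]
    [IsScalarTower ℂ A A] [SMulCommClass ℂ A A] : Prop :=
  ∀ D : A →L[ℂ] StrongDual ℂ A,
    (∀ a b x : A, D (a * b) x = D b (x * a) + D a (b * x)) →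
    ∃ ξ : StrongDual ℂ A, ∀ a x : A, D a x = ξ (x * a) - ξ (a * x)

private lemma dense_of_dual_vanish {E : Type*} [NormedAddCommGroup E] [NormedSpace ℂ E]
    (S : Submodule ℂ E)
    (h : ∀ l : StrongDual ℂ E, (∀ x ∈ S, l x = 0) → l = 0) :
    S.topologicalClosure = ⊤ := by
  by_contra hne
  obtain ⟨x, hx⟩ : ∃ x : E, x ∉ S.topologicalClosure := by
    by_contra h'
    push_neg at h'
    exact hne (Submodule.eq_top_iff'.mpr h')
  set T := S.topologicalClosure with hT
  haveI : IsClosed (T : Set E) := S.isClosed_topologicalClosure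
  have hmk : (Submodule.Quotient.mk x : E ⧸ T) ≠ 0 := by
    simpa [Submodule.Quotient.mk_eq_zero] using hx
  obtain ⟨g, -, hg⟩ := exists_dual_vector ℂ _ (norm_ne_zero_iff.mpr hmk)
  have hmkQ : ∃ q : E →L[ℂ] E ⧸ T, ∀ y, q y = Submodule.Quotient.mk y :=
    ⟨LinearMap.mkContinuous T.mkQ 1 (fun m => by
      simpa using Submodule.Quotient.norm_mk_le T m), fun y => rfl⟩
  obtain ⟨q, hq⟩ := hmkQ
  have hl : ∀ y ∈ S, (g.comp q) y = 0 := by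
    intro y hy
    have : (Submodule.Quotient.mk y : E ⧸ T) = 0 :=
      (Submodule.Quotient.mk_eq_zero _).mpr (Submodule.le_topologicalClosure S hy)
    simp [hq, this]
  have := h (g.comp q) hl
  have hx0 : g (Submodule.Quotient.mk x) = 0 := by
    have := congrFun (congrArg (fun f : StrongDual ℂ E => (f : E → ℂ)) this) x
    simpa [hq] using this
  rw [hx0] at hg
  exact hmk (norm_eq_zero.mp (Complex.ofReal_eq_zero.mp hg.symm))

/-- A commutative Banach algebra is ideally amenable if and only
if it is weakly amenable. -/
theorem ideallyAmenable_iff_weaklyAmenable_of_comm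
    {A : Type*} [NonUnitalNormedCommRing A] [NormedSpace ℂ A]
    [IsScalarTower ℂ A A] [SMulCommClass ℂ A A] [CompleteSpace A] :
    IdeallyAmenable A ↔ WeaklyAmenable A := by
  constructor
  · -- ideally amenable → weakly amenable
    intro hIA D hD
    have hTop : IsClosedTwoSidedIdeal (⊤ : Submodule ℂ A) :=
      ⟨by simpa using isClosed_univ, fun _ _ _ => Submodule.mem_top,
        fun _ _ _ => Submodule.mem_top⟩
    set D' : A →L[ℂ] StrongDual ℂ (⊤ : Submodule ℂ A) :=
      ((ContinuousLinearMap.compL ℂ (⊤ : Submodule ℂ A) A ℂ).flip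
        (Submodule.subtypeL ⊤)).comp D with hD'def
    have hD'app : ∀ (a : A) (i : (⊤ : Submodule ℂ A)), D' a i = D a (i : A) := fun a i => rfl
    have hder : IsIdealDerivation ⊤ hTop D' := by
      intro a b i
      simpa [hD'app] using hD a b (i : A)
    obtain ⟨ξ, hξ⟩ := hIA ⊤ hTop D' hder
    refine ⟨0, fun a x => ?_⟩
    have := hξ a ⟨x, Submodule.mem_top⟩
    rw [hD'app] at this
    have heq : (⟨x * a, hTop.mul_right a Submodule.mem_top⟩ : (⊤ : Submodule ℂ A)) =
        ⟨a * x, hTop.mul_left a Submodule.mem_top⟩ := Subtype.ext (mul_comm x a)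
    rw [heq, sub_self] at this
    simpa using this
  · -- weakly amenable → ideally amenable
    intro hWA I hI D hD
    -- Step 1: products are dense in A.
    have hdense : (Submodule.span ℂ {z : A | ∃ a b : A, a * b = z}).topologicalClosure = ⊤ := by
      apply dense_of_dual_vanish
      intro l hl
      have hl' : ∀ a b : A, l (a * b) = 0 := fun a b =>
        hl _ (Submodule.subset_span ⟨a, b, rfl⟩)
      obtain ⟨ξ, hξ⟩ := hWA (l.smulRight l) (by
        intro a b x
        simp [ContinuousLinearMap.smulRight_apply, hl', smul_eq_mul])
      ext x
      have := hξ x x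
      simp [ContinuousLinearMap.smulRight_apply, smul_eq_mul, mul_comm] at this
      simpa using this
    -- Step 2: D vanishes on A·I.
    have hzero : ∀ (c x : A) (i : I), D c ⟨x * (i : A), hI.mul_left x i.2⟩ = 0 := by
      intro c x i
      set μ : A →L[ℂ] I :=
        ((ContinuousLinearMap.mul ℂ A).flip (i : A)).codRestrict I
          (fun y => hI.mul_left y i.2) with hμdef
      have hμ : ∀ y : A, (μ y : A) = y * (i : A) := fun y => rfl
      set E : A →L[ℂ] StrongDual ℂ A :=
        ((ContinuousLinearMap.compL ℂ A I ℂ).flip μ).comp D with hEdef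
      have hEapp : ∀ (c y : A), E c y = D c (μ y) := fun c y => rfl
      have hEder : ∀ a b y : A, E (a * b) y = E b (y * a) + E a (b * y) := by
        intro a b y
        have h1 := hD a b (μ y)
        rw [hEapp, h1, hEapp, hEapp]
        congr 1
        · exact congrArg (D b) (Subtype.ext (by
            show (μ y : A) * a = (μ (y * a) : A)
            rw [hμ, hμ, mul_right_comm]))
        · exact congrArg (D a) (Subtype.ext (by
            show b * (μ y : A) = (μ (b * y) : A)
            rw [hμ, hμ, mul_assoc]))
      obtain ⟨ξ, hξ⟩ := hWA E hEder
      have := hξ c x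
      rw [mul_comm x c, sub_self] at this
      have h2 : D c (μ x) = 0 := by rw [← hEapp, this]
      have : (μ x) = (⟨x * (i : A), hI.mul_left x i.2⟩ : I) := Subtype.ext (hμ x)
      rwa [this] at h2
    -- Step 3: D vanishes on products.
    have hprod : ∀ a b : A, D (a * b) = 0 := by
      intro a b
      ext j
      rw [hD a b j]
      have h1 : (⟨(j : A) * a, hI.mul_right a j.2⟩ : I) =
          ⟨a * (j : A), hI.mul_left a j.2⟩ := Subtype.ext (mul_comm _ _)
      rw [h1, hzero b a j, hzero a b j, add_zero]
      rfl
    -- Step 4: D vanishes everywhere, hence trivially inner.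
    have hDzero : ∀ a : A, D a = 0 := by
      have hle : Submodule.span ℂ {z : A | ∃ a b : A, a * b = z} ≤ LinearMap.ker (D : A →ₗ[ℂ] StrongDual ℂ I) := by
        rw [Submodule.span_le]
        rintro z ⟨a, b, rfl⟩
        exact LinearMap.mem_ker.mpr (hprod a b)
      have hker : IsClosed ((LinearMap.ker (D : A →ₗ[ℂ] StrongDual ℂ I) : Submodule ℂ A) : Set A) :=
        (isClosed_singleton.preimage D.continuous)
      have := Submodule.topologicalClosure_minimal _ hle hker
      rw [hdense] at this
      intro a
      exact LinearMap.mem_ker.mp (this Submodule.mem_top)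
    exact ⟨0, fun a i => by rw [hDzero a]; simp⟩
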